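/- Every normal monoid is a filtered union of finitely generated normal monoids, and every seminormal monoid is a filtered union of finitely generated seminormal monoids. -/

import Mathlib

section Aux

/-- Dickson-type basis lemma. -/
lemma dickson_basis {k : Type} [Fintype k] (A : Set (k → ℕ)) :
    ∃ B : Finset (k → ℕ), (↑B ⊆ A) ∧ ∀ a ∈ A, ∃ b ∈ B, ∀ i, b i ≤ a i := by
  classical
  set Min : Set (k → ℕ) := {a ∈ A | ∀ a' ∈ A, (∀ i, a' i ≤ a i) → a' = a} with hMin
  have claim1 : ∀ n, ∀ a ∈ A, (∑ i, a i) = n → ∃ b ∈ Min, ∀ i, b i ≤ a i := by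
    intro n
    induction n using Nat.strong_induction_on with
    | _ n ih =>
      intro a ha h
      by_cases hm : a ∈ Min
      · exact ⟨a, hm, fun i => le_rfl⟩
      · simp only [hMin, Set.mem_setOf_eq, ha, true_and, not_forall] at hm
        obtain ⟨a', ha', hle, hne⟩ := hm
        have hlt : ∑ i, a' i < n := by
          subst h
          have hle' : ∑ i, a' i ≤ ∑ i, a i :=
            Finset.sum_le_sum fun i _ => hle i
          rcases lt_or_eq_of_le hle' with h | h
          · exact h
          · exfalso; apply hne; funext i
            exact (Finset.sum_eq_sum_iff_of_le (fun i _ => hle i)).1 h i (Finset.mem_univ i)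
        obtain ⟨b, hb, hb2⟩ := ih _ hlt a' ha' rfl
        exact ⟨b, hb, fun i => (hb2 i).trans (hle i)⟩
  have claim2 : Min.Finite := by
    by_contra hinf
    obtain f := Set.Infinite.natEmbedding Min (hinf)
    have hpwo : Set.IsPWO Min :=
      Set.isPWO_of_wellQuasiOrderedLE Min
    obtain ⟨m, n, hmn, hle⟩ := hpwo (fun j => f j)
    have := ((f n).2.2) (f m) (f m).2.1 (fun i => hle i)
    exact absurd (f.injective (Subtype.ext this)) hmn.ne
  refine ⟨claim2.toFinset, ?_, ?_⟩
  · intro b hb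
    exact (claim2.mem_toFinset.1 hb).1
  · intro a ha
    obtain ⟨b, hb, h⟩ := claim1 _ a ha rfl
    exact ⟨b, claim2.mem_toFinset.2 hb, h⟩

variable {V : Type} [AddCommGroup V] [Module ℚ V]

lemma intTorsionFree : NoZeroSMulDivisors ℤ V := by
  constructor
  intro n v h
  by_cases hn : n = 0
  · exact Or.inl hn
  · right
    have h2 : ((n : ℚ)) • v = 0 := by
      rw [Int.cast_smul_eq_zsmul]; exact h
    rcases smul_eq_zero.1 h2 with h3 | h3
    · exact absurd (by exact_mod_cast h3) hn
    · exact h3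

set_option linter.unusedSectionVars false

lemma mem_closure_finset {F : Finset V} {x : V} :
    x ∈ AddSubmonoid.closure (F : Set V) ↔ ∃ m : F → ℕ, x = ∑ i : F, m i • (i : V) := by
  classical
  constructor
  · intro hx
    induction hx using AddSubmonoid.closure_induction with
    | mem v hv =>
      refine ⟨fun i => if i = ⟨v, hv⟩ then 1 else 0, ?_⟩
      simp [Finset.sum_ite_eq]
    | zero => exact ⟨0, by simp⟩
    | add x y _ _ hx hy =>
      obtain ⟨m1, h1⟩ := hx
      obtain ⟨m2, h2⟩ := hy
      exact ⟨m1 + m2, by simp [h1, h2, add_smul, Finset.sum_add_distrib]⟩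
  · rintro ⟨m, rfl⟩
    exact sum_mem (fun i _ => AddSubmonoid.nsmul_mem _ (AddSubmonoid.subset_closure i.2) _)

/-- Span membership implies additive subgroup closure membership. -/
lemma span_subset_gp (s : Set V) : (Submodule.span ℤ s : Set V) ⊆ (AddSubgroup.closure s : Set V) := by
  intro x hx
  have : Submodule.span ℤ s ≤ (AddSubgroup.closure s).toIntSubmodule :=
    Submodule.span_le.2 AddSubgroup.subset_closure
  exact this hx

lemma gp_subset_span (s : Set V) :
    (AddSubgroup.closure s : Set V) ⊆ (Submodule.span ℤ s : Set V) := by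
  intro x hx
  have : AddSubgroup.closure s ≤ (Submodule.span ℤ s).toAddSubgroup :=
    (AddSubgroup.closure_le _).2 Submodule.subset_span
  exact this hx

def Dset (F : Finset V) : Set V :=
  {x | x ∈ Submodule.span ℤ (F : Set V) ∧
    ∃ c : ℕ, 0 < c ∧ ∃ m : F → ℕ, (∀ i, m i ≤ c) ∧ c • x = ∑ i : F, m i • (i : V)}

lemma finite_Dset (F : Finset V) : (Dset F).Finite := by
  classical
  haveI := intTorsionFree (V := V)
  set GF := Submodule.span ℤ (F : Set V) with hGF
  haveI : Module.Free ℤ GF := Module.free_of_finite_type_torsion_free'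
  let b := Module.Free.chooseBasis ℤ GF
  let ι := Module.Free.ChooseBasisIndex ℤ GF
  let a : F → (ι →₀ ℤ) := fun i => b.repr ⟨(i : V), Submodule.subset_span i.2⟩
  let A : ι → ℤ := fun j => ∑ i : F, |a i j|
  have hfin : Set.Finite ((fun z : ι → ℤ => ∑ j : ι, z j • ((b j : GF) : V)) ''
      (Set.univ.pi fun j : ι => Set.Icc (-(A j)) (A j))) :=
    Set.Finite.image _ (Set.Finite.pi fun j => Set.finite_Icc _ _)
  refine hfin.subset ?_
  rintro x ⟨hxspan, c, hc, m, hmle, hsum⟩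
  set xG : GF := ⟨x, hxspan⟩ with hxG
  have key : c • xG = ∑ i : F, m i • (⟨(i : V), Submodule.subset_span i.2⟩ : GF) := by
    apply Subtype.ext
    push_cast [AddSubmonoidClass.coe_finset_sum]
    simpa using hsum
  have key2 : (c • b.repr xG : ι →₀ ℤ) = ∑ i : F, m i • a i := by
    rw [← map_nsmul, key, map_sum]
    exact Finset.sum_congr rfl fun i _ => map_nsmul _ _ _
  have key2 : ∀ j : ι, (c : ℤ) * b.repr xG j = ∑ i : F, (m i : ℤ) * a i j := by
    intro j
    have := DFunLike.congr_fun key2 j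
    simpa [Finsupp.smul_apply, Finsupp.finset_sum_apply, nsmul_eq_mul] using this
  have bound : ∀ j : ι, |b.repr xG j| ≤ A j := by
    intro j
    have hcpos : (0 : ℤ) < (c : ℤ) := by exact_mod_cast hc
    apply le_of_mul_le_mul_left _ hcpos
    calc (c : ℤ) * |b.repr xG j| = |(c : ℤ) * b.repr xG j| := by
          rw [abs_mul, abs_of_nonneg (le_of_lt hcpos)]
      _ = |∑ i : F, (m i : ℤ) * a i j| := by rw [key2 j]
      _ ≤ ∑ i : F, |(m i : ℤ) * a i j| := Finset.abs_sum_le_sum_abs _ _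
      _ ≤ ∑ i : F, (c : ℤ) * |a i j| := by
          apply Finset.sum_le_sum
          intro i _
          rw [abs_mul]
          apply mul_le_mul_of_nonneg_right _ (abs_nonneg _)
          rw [abs_of_nonneg (by positivity)]
          exact_mod_cast hmle i
      _ = (c : ℤ) * A j := by rw [Finset.mul_sum]
  refine ⟨fun j => b.repr xG j, ?_, ?_⟩
  · intro j _
    exact Set.mem_Icc.2 (abs_le.1 (bound j))
  · have := b.sum_repr xG
    calc ∑ j : ι, b.repr xG j • ((b j : GF) : V)
        = ((∑ j : ι, b.repr xG j • b j : GF) : V) := by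
          push_cast [AddSubmonoidClass.coe_finset_sum]; rfl
      _ = x := by rw [this]

/-- The "normalization" of the monoid generated by `F`. -/
def hatC (F : Finset V) : AddSubmonoid V where
  carrier := {x | x ∈ Submodule.span ℤ (F : Set V) ∧
    ∃ c : ℕ, 0 < c ∧ c • x ∈ AddSubmonoid.closure (F : Set V)}
  zero_mem' := ⟨Submodule.zero_mem _, 1, one_pos, by simpa using zero_mem _⟩
  add_mem' := by
    rintro x y ⟨hx, c, hc, hcx⟩ ⟨hy, e, he, hey⟩
    refine ⟨Submodule.add_mem _ hx hy, c * e, Nat.mul_pos hc he, ?_⟩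
    rw [smul_add]
    apply add_mem
    · rw [mul_comm, mul_smul]
      exact AddSubmonoid.nsmul_mem _ hcx _
    · rw [mul_smul]
      exact AddSubmonoid.nsmul_mem _ hey _

/-- The "seminormalization" of the monoid generated by `F`. -/
def snC (F : Finset V) : AddSubmonoid V where
  carrier := {x | x ∈ Submodule.span ℤ (F : Set V) ∧
    ∃ n₀ : ℕ, ∀ n, n₀ ≤ n → n • x ∈ AddSubmonoid.closure (F : Set V)}
  zero_mem' := ⟨Submodule.zero_mem _, 0, fun n _ => by simpa using zero_mem _⟩
  add_mem' := by
    rintro x y ⟨hx, c, hcx⟩ ⟨hy, e, hey⟩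
    refine ⟨Submodule.add_mem _ hx hy, max c e, fun n hn => ?_⟩
    rw [smul_add]
    exact add_mem (hcx n (le_trans (le_max_left _ _) hn)) (hey n (le_trans (le_max_right _ _) hn))

lemma closure_le_hatC (F : Finset V) : AddSubmonoid.closure (F : Set V) ≤ hatC F := by
  rw [AddSubmonoid.closure_le]
  intro x hx
  exact ⟨Submodule.subset_span hx, 1, one_pos, by simpa using AddSubmonoid.subset_closure hx⟩

lemma closure_le_snC (F : Finset V) : AddSubmonoid.closure (F : Set V) ≤ snC F := by
  rw [AddSubmonoid.closure_le]
  intro x hx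
  exact ⟨Submodule.subset_span hx, 0,
    fun n _ => AddSubmonoid.nsmul_mem _ (AddSubmonoid.subset_closure hx) _⟩

lemma snC_le_hatC (F : Finset V) : snC F ≤ hatC F := by
  rintro x ⟨hx, n₀, h⟩
  exact ⟨hx, n₀ + 1, Nat.succ_pos _, h _ (Nat.le_succ _)⟩

lemma hat_decomp {F : Finset V} {x : V} (h : x ∈ hatC F) :
    ∃ d ∈ Dset F, ∃ m : F → ℕ, x = d + ∑ i : F, m i • (i : V) := by
  classical
  obtain ⟨hx, c, hc, hcx⟩ := h
  obtain ⟨m, hm⟩ := mem_closure_finset.1 hcx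
  set q : F → ℕ := fun i => m i / c with hq
  set d : V := x - ∑ i : F, q i • (i : V) with hd
  have hsum : ∀ i : F, m i • (i : V) = (c * q i) • (i : V) + (m i % c) • (i : V) := by
    intro i
    rw [← add_smul]
    congr 1
    rw [hq]
    exact (Nat.div_add_mod (m i) c).symm
  refine ⟨d, ⟨?_, c, hc, fun i => m i % c, fun i => le_of_lt (Nat.mod_lt _ hc), ?_⟩, q,
    by rw [hd]; abel⟩
  · exact Submodule.sub_mem _ hx (sum_mem fun i _ => nsmul_mem (Submodule.subset_span i.2) _)
  · rw [hd, smul_sub, hm, Finset.smul_sum]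
    rw [Finset.sum_congr rfl fun i _ => hsum i, Finset.sum_add_distrib]
    have : ∀ i : F, c • q i • (i : V) = (c * q i) • (i : V) := fun i => (mul_smul c (q i) _).symm
    rw [Finset.sum_congr rfl fun i _ => this i]
    abel

lemma fg_between (F : Finset V) (S : AddSubmonoid V)
    (h1 : AddSubmonoid.closure (F : Set V) ≤ S) (h2 : ∀ x ∈ S, x ∈ hatC F) : S.FG := by
  classical
  set Ad : V → Set (F → ℕ) := fun d => {mm | d + ∑ i : F, mm i • (i : V) ∈ S} with hAd
  choose B hB1 hB2 using fun d : V => dickson_basis (Ad d)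
  set DF : Finset V := (finite_Dset F).toFinset with hDF
  set gens : Finset V :=
    F ∪ DF.biUnion (fun d => (B d).image (fun mm => d + ∑ i : F, mm i • (i : V))) with hgens
  refine ⟨gens, le_antisymm ?_ ?_⟩
  · rw [AddSubmonoid.closure_le]
    intro y hy
    rw [hgens, Finset.coe_union] at hy
    rcases hy with hy | hy
    · exact h1 (AddSubmonoid.subset_closure hy)
    · simp only [Finset.coe_biUnion, Set.mem_iUnion, Finset.mem_coe, Finset.mem_image] at hy
      obtain ⟨d, _, mm, hmm, rfl⟩ := hy
      exact hB1 d hmm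
  · intro x hx
    obtain ⟨d, hd, m, hxeq⟩ := hat_decomp (h2 x hx)
    have hmAd : m ∈ Ad d := by rw [hAd]; simp only [Set.mem_setOf_eq, ← hxeq]; exact hx
    obtain ⟨b, hb, hble⟩ := hB2 d m hmAd
    have hsplit : x = (d + ∑ i : F, b i • (i : V)) + ∑ i : F, (m i - b i) • (i : V) := by
      rw [hxeq, add_assoc, ← Finset.sum_add_distrib]
      congr 1
      refine Finset.sum_congr rfl fun i _ => ?_
      rw [← add_smul, Nat.add_sub_cancel' (hble i)]
    rw [hsplit]
    apply add_mem
    · apply AddSubmonoid.subset_closure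
      rw [hgens]
      apply Finset.mem_coe.2
      refine Finset.mem_union_right _ (Finset.mem_biUnion.2 ⟨d, ?_, Finset.mem_image.2 ⟨b, hb, rfl⟩⟩)
      exact (Set.Finite.mem_toFinset _).2 hd
    · refine AddSubmonoid.closure_mono ?_ (mem_closure_finset.2 ⟨fun i => m i - b i, rfl⟩)
      rw [hgens]
      push_cast
      exact Set.subset_union_left

lemma hatC_fg (F : Finset V) : (hatC F).FG :=
  fg_between F _ (closure_le_hatC F) (fun _ hx => hx)

lemma snC_fg (F : Finset V) : (snC F).FG :=
  fg_between F _ (closure_le_snC F) (fun _ hx => snC_le_hatC F hx)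

lemma hatC_mono {F F' : Finset V} (h : F ⊆ F') : hatC F ≤ hatC F' := by
  rintro x ⟨hx, c, hc, hcx⟩
  exact ⟨Submodule.span_mono (Finset.coe_subset.2 h) hx, c, hc,
    AddSubmonoid.closure_mono (Finset.coe_subset.2 h) hcx⟩

lemma snC_mono {F F' : Finset V} (h : F ⊆ F') : snC F ≤ snC F' := by
  rintro x ⟨hx, n₀, hn⟩
  exact ⟨Submodule.span_mono (Finset.coe_subset.2 h) hx, n₀,
    fun n hle => AddSubmonoid.closure_mono (Finset.coe_subset.2 h) (hn n hle)⟩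

end Aux

/-- A submonoid `N` of a `ℚ`-vector space (equivalently, a commutative, cancellative,
torsion-free monoid) is *normal* if every element of its group of differences
having a positive multiple in `N` lies in `N`. -/
def IsNormalMonoid {V : Type} [AddCommGroup V] [Module ℚ V] (N : AddSubmonoid V) : Prop :=
  ∀ x ∈ AddSubgroup.closure (N : Set V), (∃ c : ℕ, 0 < c ∧ c • x ∈ N) → x ∈ N

/-- A submonoid `N` of a `ℚ`-vector space is *seminormal* if every element `x` of its
group of differences with `2 • x ∈ N` and `3 • x ∈ N` lies in `N`. -/
def IsSeminormalMonoid {V : Type} [AddCommGroup V] [Module ℚ V] (N : AddSubmonoid V) : Prop :=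
  ∀ x ∈ AddSubgroup.closure (N : Set V), (2 : ℕ) • x ∈ N → (3 : ℕ) • x ∈ N → x ∈ N

section Main

set_option linter.unusedSectionVars false

variable {V : Type} [AddCommGroup V] [Module ℚ V]

lemma gp_hatC_le_span (F : Finset V) {x : V}
    (hx : x ∈ AddSubgroup.closure ((hatC F : Set V))) : x ∈ Submodule.span ℤ (F : Set V) := by
  have h1 : (AddSubgroup.closure ((hatC F : Set V))) ≤
      (Submodule.span ℤ (F : Set V)).toAddSubgroup :=
    (AddSubgroup.closure_le _).2 (fun y hy => hy.1)
  exact h1 hx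

lemma gp_snC_le_span (F : Finset V) {x : V}
    (hx : x ∈ AddSubgroup.closure ((snC F : Set V))) : x ∈ Submodule.span ℤ (F : Set V) := by
  have h1 : (AddSubgroup.closure ((snC F : Set V))) ≤
      (Submodule.span ℤ (F : Set V)).toAddSubgroup :=
    (AddSubgroup.closure_le _).2 (fun y hy => hy.1)
  exact h1 hx

lemma hatC_normal (F : Finset V) : IsNormalMonoid (hatC F) := by
  rintro x hxgp ⟨c, hc, hcx⟩
  obtain ⟨hsp, e, he, hecx⟩ := hcx
  refine ⟨gp_hatC_le_span F hxgp, e * c, Nat.mul_pos he hc, ?_⟩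
  rw [mul_smul]
  exact hecx

lemma snC_seminormal (F : Finset V) : IsSeminormalMonoid (snC F) := by
  intro x hxgp h2 h3
  obtain ⟨sp2, a, ha⟩ := h2
  obtain ⟨sp3, b, hb⟩ := h3
  refine ⟨gp_snC_le_span F hxgp, 2 * a + 3 * b + 4, fun m hm => ?_⟩
  obtain ⟨i, j, hai, hbj, hm'⟩ : ∃ i j, a ≤ i ∧ b ≤ j ∧ m = 2 * i + 3 * j :=
    ⟨(m - 3 * (b + (m + b) % 2)) / 2, b + (m + b) % 2, by omega⟩
  have hrw : m • x = i • ((2 : ℕ) • x) + j • ((3 : ℕ) • x) := by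
    rw [smul_smul, smul_smul, ← add_smul, hm']
    ring_nf
  rw [hrw]
  exact add_mem (ha i hai) (hb j hbj)

lemma hatC_le_of_normal {M : AddSubmonoid V} (hM : IsNormalMonoid M) {F : Finset V}
    (hF : (F : Set V) ⊆ (M : Set V)) : hatC F ≤ M := by
  rintro x ⟨hsp, c, hc, hcx⟩
  apply hM x
  · exact span_subset_gp (M : Set V) (Submodule.span_mono hF hsp)
  · exact ⟨c, hc, (AddSubmonoid.closure_le.2 hF) hcx⟩

lemma descend {M : AddSubmonoid V} (hM : IsSeminormalMonoid M) {x : V}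
    (hx : x ∈ AddSubgroup.closure (M : Set V)) :
    ∀ k : ℕ, (∀ n, k + 1 ≤ n → n • x ∈ M) → x ∈ M := by
  intro k
  induction k with
  | zero => intro h; simpa using h 1 le_rfl
  | succ k ih =>
    intro h
    apply ih
    intro n hn
    rcases eq_or_lt_of_le hn with he | hlt
    · rw [← he]
      apply hM ((k + 1) • x) (AddSubgroup.nsmul_mem _ hx _)
      · rw [smul_smul]; exact h _ (by omega)
      · rw [smul_smul]; exact h _ (by omega)
    · exact h n hlt

lemma snC_le_of_seminormal {M : AddSubmonoid V} (hM : IsSeminormalMonoid M) {F : Finset V}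
    (hF : (F : Set V) ⊆ (M : Set V)) : snC F ≤ M := by
  rintro x ⟨hsp, n₀, h⟩
  have hxgp : x ∈ AddSubgroup.closure (M : Set V) :=
    span_subset_gp (M : Set V) (Submodule.span_mono hF hsp)
  apply descend hM hxgp n₀
  intro n hn
  exact (AddSubmonoid.closure_le.2 hF) (h n (by omega))

lemma mem_hatC_self (x : V) : x ∈ hatC ({x} : Finset V) := by
  refine ⟨?_, 1, one_pos, ?_⟩
  · apply Submodule.subset_span
    simp
  · simpa using AddSubmonoid.subset_closure (by simp : x ∈ (({x} : Finset V) : Set V))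

lemma mem_snC_self (x : V) : x ∈ snC ({x} : Finset V) := by
  refine ⟨?_, 0, fun n _ => ?_⟩
  · apply Submodule.subset_span
    simp
  · exact AddSubmonoid.nsmul_mem _
      (AddSubmonoid.subset_closure (by simp : x ∈ (({x} : Finset V) : Set V))) _

end Main

/-- Every normal monoid is a filtered union of finitely generated normal monoids, and
every seminormal monoid is a filtered union of finitely generated seminormal monoids. -/
theorem stmt1 {V : Type} [AddCommGroup V] [Module ℚ V] (M : AddSubmonoid V) :
    (IsNormalMonoid M →
      ∃ (ι : Type) (N : ι → AddSubmonoid V), Nonempty ι ∧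
        (∀ i j, ∃ k, N i ≤ N k ∧ N j ≤ N k) ∧
        (∀ i, N i ≤ M ∧ (N i).FG ∧ IsNormalMonoid (N i)) ∧
        (M : Set V) = ⋃ i, (N i : Set V)) ∧
    (IsSeminormalMonoid M →
      ∃ (ι : Type) (N : ι → AddSubmonoid V), Nonempty ι ∧
        (∀ i j, ∃ k, N i ≤ N k ∧ N j ≤ N k) ∧
        (∀ i, N i ≤ M ∧ (N i).FG ∧ IsSeminormalMonoid (N i)) ∧
        (M : Set V) = ⋃ i, (N i : Set V)) := by
  classical
  constructor
  · intro hM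
    refine ⟨{F : Finset V // (F : Set V) ⊆ (M : Set V)}, fun i => hatC i.1,
      ⟨⟨∅, by simp⟩⟩, ?_, ?_, ?_⟩
    · intro i j
      refine ⟨⟨i.1 ∪ j.1, ?_⟩, hatC_mono Finset.subset_union_left,
        hatC_mono Finset.subset_union_right⟩
      push_cast
      exact Set.union_subset i.2 j.2
    · intro i
      exact ⟨hatC_le_of_normal hM i.2, hatC_fg i.1, hatC_normal i.1⟩
    · ext x
      simp only [Set.mem_iUnion, SetLike.mem_coe]
      constructor
      · intro hx
        exact ⟨⟨{x}, by simpa using hx⟩, mem_hatC_self x⟩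
      · rintro ⟨i, hx⟩
        exact hatC_le_of_normal hM i.2 hx
  · intro hM
    refine ⟨{F : Finset V // (F : Set V) ⊆ (M : Set V)}, fun i => snC i.1,
      ⟨⟨∅, by simp⟩⟩, ?_, ?_, ?_⟩
    · intro i j
      refine ⟨⟨i.1 ∪ j.1, ?_⟩, snC_mono Finset.subset_union_left,
        snC_mono Finset.subset_union_right⟩
      push_cast
      exact Set.union_subset i.2 j.2
    · intro i
      exact ⟨snC_le_of_seminormal hM i.2, snC_fg i.1, snC_seminormal i.1⟩
    · ext x
      simp only [Set.mem_iUnion, SetLike.mem_coe]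
      constructor
      · intro hx
        exact ⟨⟨{x}, by simpa using hx⟩, mem_snC_self x⟩
      · rintro ⟨i, hx⟩
        exact snC_le_of_seminormal hM i.2 hx
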